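/- Let Λ = M ⊕ Zk ⊕ Zℓ with M even unimodular, k² = −2d, ℓ² = −2t. Let β ∈ Λ be a primitive vector with β² < 0, β² | 2·div(β), and suppose the induced isometry of r_β on A_Λ ≅ Z/2dZ × Z/2tZ equals s = diag(1, −1). Then β² = −2t and 2td divides β·k. -/

import Mathlib

/-!
STATEMENT 15. Same setting as Statement 13: `Λ = M ⊕ ℤk ⊕ ℤℓ`, `M` even unimodular,
`k² = -2d`, `ℓ² = -2t`; `β = a•m + b•k + c•ℓ` primitive (`gcd(a,b,c) = 1`, `m2 = m²` even),
`β² = a² m2 - 2d b² - 2t c² < 0`, `div(β) = gcd(a, 2d b, 2t c)`, and `β² ∣ 2 div(β)`.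
Assume the induced action of `r_β` on `A_Λ ≅ ℤ/2d × ℤ/2t`, namely the matrix
`[[1 + 4db²/β², 4dbc/β²], [4tbc/β², 1 + 4tc²/β²]]`, equals `s = diag(1, -1)`.
Then `β² = -2t` and `2td` divides `β·k = -2d b`.
-/
theorem stmt_15 (t d a b c m2 β2 D : ℤ) (ht : 0 < t) (hd : 0 < d)
    (hprim : Int.gcd (Int.gcd a b) c = 1) (heven : 2 ∣ m2)
    (hβ2 : β2 = a ^ 2 * m2 - 2 * d * b ^ 2 - 2 * t * c ^ 2) (hneg : β2 < 0)
    (hD : D = Int.gcd (Int.gcd a (2 * d * b)) (2 * t * c))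
    (hrefl : β2 ∣ 2 * D)
    (e₁₁ e₁₂ e₂₁ e₂₂ : ℤ)
    (he₁₁ : β2 * e₁₁ = 4 * d * b ^ 2) (he₁₂ : β2 * e₁₂ = 4 * d * b * c)
    (he₂₁ : β2 * e₂₁ = 4 * t * b * c) (he₂₂ : β2 * e₂₂ = 4 * t * c ^ 2)
    (hs₁₁ : 1 + e₁₁ ≡ 1 [ZMOD 2 * d]) (hs₁₂ : e₁₂ ≡ 0 [ZMOD 2 * d])
    (hs₂₁ : e₂₁ ≡ 0 [ZMOD 2 * t]) (hs₂₂ : 1 + e₂₂ ≡ -1 [ZMOD 2 * t]) :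
    β2 = -(2 * t) ∧ (2 * t * d) ∣ -(2 * d * b) := by
  have hβne : β2 ≠ 0 := ne_of_lt hneg
  have htne : t ≠ 0 := ne_of_gt ht
  -- extract divisibilities from the congruences
  obtain ⟨x, hx⟩ : (2 * d) ∣ e₁₁ := by
    have h := Int.modEq_iff_dvd.mp hs₁₁
    rw [show (1:ℤ) - (1 + e₁₁) = -e₁₁ by ring] at h
    exact dvd_neg.mp h
  obtain ⟨w, hw⟩ : (2 * t) ∣ e₂₁ := by
    have h := Int.modEq_iff_dvd.mp hs₂₁
    rw [show (0:ℤ) - e₂₁ = -e₂₁ by ring] at h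
    exact dvd_neg.mp h
  obtain ⟨u, hu⟩ : (2 * t) ∣ (e₂₂ + 2) := by
    have h := Int.modEq_iff_dvd.mp hs₂₂
    rw [show (-1:ℤ) - (1 + e₂₂) = -(e₂₂ + 2) by ring] at h
    exact dvd_neg.mp h
  -- cancelled versions
  have hX : β2 * x = 2 * b ^ 2 := by
    have h2d : (2 * d : ℤ) ≠ 0 := by positivity
    apply mul_left_cancel₀ h2d
    linear_combination he₁₁ - β2 * hx
  have hW : β2 * w = 2 * b * c := by
    have h2t : (2 * t : ℤ) ≠ 0 := by positivity
    apply mul_left_cancel₀ h2t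
    linear_combination he₂₁ - β2 * hw
  have hU : β2 * (t * u - 1) = 2 * t * c ^ 2 := by
    have h2 : (2 : ℤ) ≠ 0 := two_ne_zero
    apply mul_left_cancel₀ h2
    linear_combination he₂₂ - β2 * hu
  -- t divides β2 : β2 = t * g
  set g : ℤ := β2 * u - 2 * c ^ 2 with hgdef
  have hg : β2 = t * g := by
    rw [hgdef]; linear_combination -hU
  have hgc : g * (t * u - 1) = 2 * c ^ 2 := by
    apply mul_left_cancel₀ htne
    linear_combination hU - (t * u - 1) * hg
  have hgneg : g < 0 := by
    rcases lt_trichotomy g 0 with h | h | h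
    · exact h
    · exfalso; rw [hg, h, mul_zero] at hneg; exact absurd hneg (lt_irrefl 0)
    · exfalso; nlinarith [hg]
  -- g divides 2a, 2b², 2c²
  have hDa : D ∣ a := by
    rw [hD]
    exact dvd_trans (Int.gcd_dvd_left _ _) (Int.gcd_dvd_left _ _)
  have hβ2a : β2 ∣ 2 * a := dvd_trans hrefl (mul_dvd_mul_left 2 hDa)
  have hgβ : g ∣ β2 := Dvd.intro_left t hg.symm
  have hga : g ∣ 2 * a := dvd_trans hgβ hβ2a
  have hgb : g ∣ 2 * b ^ 2 := dvd_trans hgβ ⟨x, hX.symm⟩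
  have hgc2 : g ∣ 2 * c ^ 2 := ⟨t * u - 1, hgc.symm⟩
  -- Bezout for gcd a b
  set G : ℤ := (Int.gcd a b : ℤ) with hGdef
  have hbez : G = a * Int.gcdA a b + b * Int.gcdB a b := Int.gcd_eq_gcd_ab a b
  have hgG : g ∣ 2 * G ^ 2 := by
    set A := Int.gcdA a b
    set B := Int.gcdB a b
    have h1 : g ∣ (2 * a) * (a * A ^ 2 + 2 * b * A * B) := Dvd.dvd.mul_right hga _
    have h2 : g ∣ (2 * b ^ 2) * B ^ 2 := Dvd.dvd.mul_right hgb _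
    have : 2 * G ^ 2 = (2 * a) * (a * A ^ 2 + 2 * b * A * B) + (2 * b ^ 2) * B ^ 2 := by
      rw [hbez]; ring
    rw [this]
    exact dvd_add h1 h2
  -- coprimality of G and c, hence G² and c²
  have hcop : IsCoprime G c := by
    rw [Int.isCoprime_iff_gcd_eq_one]
    simpa using hprim
  have hcop2 : IsCoprime (G ^ 2) (c ^ 2) := hcop.pow
  obtain ⟨p, q, hpq⟩ := hcop2
  -- g divides 2
  have hg2 : g ∣ 2 := by
    have : (2 : ℤ) = p * (2 * G ^ 2) + q * (2 * c ^ 2) := by linear_combination 2 * hpq.symm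
    rw [this]
    exact dvd_add (Dvd.dvd.mul_left hgG p) (Dvd.dvd.mul_left hgc2 q)
  -- β2 is even, hence so is t * g
  obtain ⟨m', hm'⟩ := heven
  have hβeven : (2 : ℤ) ∣ β2 := ⟨a ^ 2 * m' - d * b ^ 2 - t * c ^ 2, by
    rw [hβ2, hm']; ring⟩
  -- conclude g = -2
  have hgval : g = -2 := by
    have h2' : -g ∣ 2 := (neg_dvd).mpr hg2
    have hle := Int.le_of_dvd (by norm_num : (0:ℤ) < 2) h2'
    have h1 : g = -1 ∨ g = -2 := by omega
    rcases h1 with h | h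
    · -- g = -1: parity contradiction
      exfalso
      have hteven : (2 : ℤ) ∣ t := by
        rw [hg, h, mul_neg_one] at hβeven
        exact (dvd_neg).mp hβeven
      obtain ⟨t', ht'⟩ := hteven
      rw [h] at hgc
      -- -(t*u - 1) = 2 c², i.e. 1 - t u = 2 c², but t even
      have : (2 : ℤ) ∣ 1 := ⟨c ^ 2 + t' * u, by linear_combination hgc + u * ht'⟩
      norm_num at this
    · exact h
  have hβval : β2 = -(2 * t) := by rw [hg, hgval]; ring
  refine ⟨hβval, ?_⟩
  -- now show t ∣ b
  have htbc : t ∣ b * c := by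
    refine ⟨-w, ?_⟩
    have := hW
    rw [hβval] at this
    linarith
  have hcopt : IsCoprime t c := by
    refine ⟨u, c, ?_⟩
    rw [hgval] at hgc
    have hgc' : 1 - t * u = c ^ 2 := by linarith
    linear_combination -hgc'
  have htb : t ∣ b := hcopt.dvd_of_dvd_mul_right htbc
  obtain ⟨b', hb'⟩ := htb
  exact ⟨-b', by rw [hb']; ring⟩
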